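/- arXiv:1709.09947 — 2 statements merged into one kernel-verified Lean document; each statement's English description precedes it below -/
import Mathlib

section
/- (Hardy–Littlewood type lemma) Let D ⊆ ℝᴺ be a convex bounded open set and F : D → ℝᴹ a differentiable map such that ‖DF(x)‖ ≤ C/√(dist(x, ∂D)) for all x ∈ D, where C > 0. Then F extends continuously to the closure of D and there is a constant C' (depending only on C and the diameter of D) such that ‖F(x) − F(y)‖ ≤ C'·‖x − y‖^{1/2} for all x, y ∈ D. -/
open Metric Set

lemma hl_infDist {N : ℕ} {D : Set (EuclideanSpace ℝ (Fin N))} (hconv : Convex ℝ D)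
    (hcompl : Dᶜ.Nonempty) {p : EuclideanSpace ℝ (Fin N)} {ρ : ℝ} (hρ : 0 < ρ)
    (hball : Metric.ball p ρ ⊆ D)
    {q1 q2 : EuclideanSpace ℝ (Fin N)} (hq1 : q1 ∈ D) (hq2 : q2 ∈ D) {t1 t2 : ℝ}
    (ht10 : 0 < t1) (ht11 : t1 ≤ 1) (ht20 : 0 < t2) (ht21 : t2 ≤ 1)
    {z : EuclideanSpace ℝ (Fin N)}
    (hz : z ∈ segment ℝ ((1 - t1) • q1 + t1 • p) ((1 - t2) • q2 + t2 • p)) :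
    min t1 t2 * ρ ≤ Metric.infDist z Dᶜ := by
  by_contra h
  push_neg at h
  obtain ⟨y, hy, hdzy⟩ := (Metric.infDist_lt_iff hcompl).mp h
  obtain ⟨a, b, ha, hb, hab, hzeq⟩ := hz
  set u : ℝ := a * t1 + b * t2 with hu_def
  have hmin : 0 < min t1 t2 := lt_min ht10 ht20
  have hminu : min t1 t2 ≤ u := by
    have h1 : min t1 t2 ≤ t1 := min_le_left _ _
    have h2 : min t1 t2 ≤ t2 := min_le_right _ _
    nlinarith
  have hu0 : 0 < u := lt_of_lt_of_le hmin hminu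
  set v : EuclideanSpace ℝ (Fin N) := u⁻¹ • (y - z) with hv_def
  have hnv : ‖v‖ < ρ := by
    have hdn : ‖y - z‖ < u * ρ := by
      have : dist z y = ‖y - z‖ := by rw [dist_eq_norm, norm_sub_rev]
      nlinarith [hdzy, this]
    rw [hv_def, norm_smul, Real.norm_eq_abs, abs_of_pos (inv_pos.mpr hu0)]
    rw [inv_mul_lt_iff₀ hu0]
    exact hdn
  have hpv : p + v ∈ D := by
    apply hball
    simp only [Metric.mem_ball, dist_eq_norm]
    simpa using hnv
  have hbr1 : (1 - t1) • q1 + t1 • (p + v) ∈ D :=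
    hconv hq1 hpv (by linarith) ht10.le (by ring)
  have hbr2 : (1 - t2) • q2 + t2 • (p + v) ∈ D :=
    hconv hq2 hpv (by linarith) ht20.le (by ring)
  have hyD : y ∈ D := by
    have key : a • ((1 - t1) • q1 + t1 • (p + v)) + b • ((1 - t2) • q2 + t2 • (p + v))
        = (a • ((1 - t1) • q1 + t1 • p) + b • ((1 - t2) • q2 + t2 • p)) + u • v := by
      rw [hu_def]; module
    have huv : u • v = y - z := by
      rw [hv_def, smul_smul, mul_inv_cancel₀ hu0.ne', one_smul]
    have := hconv hbr1 hbr2 ha hb hab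
    rwa [key, huv, hzeq, add_sub_cancel] at this
  exact hy hyD

lemma hl_seg {N M : ℕ} {D : Set (EuclideanSpace ℝ (Fin N))} (hconv : Convex ℝ D)
    (hcompl : Dᶜ.Nonempty) {p : EuclideanSpace ℝ (Fin N)} {ρ : ℝ} (hρ : 0 < ρ)
    (hball : Metric.ball p ρ ⊆ D)
    {F : EuclideanSpace ℝ (Fin N) → EuclideanSpace ℝ (Fin M)} {C : ℝ} (hC : 0 < C)
    (hdiff : ∀ x ∈ D, DifferentiableAt ℝ F x)
    (hder : ∀ x ∈ D, ‖fderiv ℝ F x‖ ≤ C / Real.sqrt (Metric.infDist x Dᶜ))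
    {q1 q2 : EuclideanSpace ℝ (Fin N)} (hq1 : q1 ∈ D) (hq2 : q2 ∈ D) {t1 t2 : ℝ}
    (ht10 : 0 < t1) (ht11 : t1 ≤ 1) (ht20 : 0 < t2) (ht21 : t2 ≤ 1) :
    ‖F ((1 - t2) • q2 + t2 • p) - F ((1 - t1) • q1 + t1 • p)‖ ≤
      C / Real.sqrt (min t1 t2 * ρ) * ‖((1 - t2) • q2 + t2 • p) - ((1 - t1) • q1 + t1 • p)‖ := by
  set X1 := (1 - t1) • q1 + t1 • p
  set X2 := (1 - t2) • q2 + t2 • p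
  have hmin : 0 < min t1 t2 * ρ := mul_pos (lt_min ht10 ht20) hρ
  have hsubD : segment ℝ X1 X2 ⊆ D := by
    intro z hz
    have h1 := hl_infDist hconv hcompl hρ hball hq1 hq2 ht10 ht11 ht20 ht21 hz
    by_contra hzD
    have : Metric.infDist z Dᶜ = 0 := Metric.infDist_zero_of_mem hzD
    rw [this] at h1
    linarith
  have bound : ∀ z ∈ segment ℝ X1 X2, ‖fderiv ℝ F z‖ ≤ C / Real.sqrt (min t1 t2 * ρ) := by
    intro z hz
    have h1 := hl_infDist hconv hcompl hρ hball hq1 hq2 ht10 ht11 ht20 ht21 hz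
    refine (hder z (hsubD hz)).trans ?_
    have h2 : Real.sqrt (min t1 t2 * ρ) ≤ Real.sqrt (Metric.infDist z Dᶜ) :=
      Real.sqrt_le_sqrt h1
    exact div_le_div_of_nonneg_left hC.le (Real.sqrt_pos.mpr hmin) h2
  exact (convex_segment X1 X2).norm_image_sub_le_of_norm_fderiv_le
    (fun z hz => hdiff z (hsubD hz)) bound (left_mem_segment ℝ X1 X2) (right_mem_segment ℝ X1 X2)

lemma hl_radial {N M : ℕ} {D : Set (EuclideanSpace ℝ (Fin N))} (hconv : Convex ℝ D)
    (hcompl : Dᶜ.Nonempty) {p : EuclideanSpace ℝ (Fin N)} {ρ : ℝ} (hρ : 0 < ρ)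
    (hball : Metric.ball p ρ ⊆ D)
    {F : EuclideanSpace ℝ (Fin N) → EuclideanSpace ℝ (Fin M)} {C : ℝ} (hC : 0 < C)
    (hdiff : ∀ x ∈ D, DifferentiableAt ℝ F x)
    (hder : ∀ x ∈ D, ‖fderiv ℝ F x‖ ≤ C / Real.sqrt (Metric.infDist x Dᶜ))
    {q : EuclideanSpace ℝ (Fin N)} (hq : q ∈ D) {t : ℝ} (ht0 : 0 < t) (ht1 : t ≤ 1) :
    ‖F ((1 - t) • q + t • p) - F q‖ ≤
      3 * (C * ‖p - q‖ * Real.sqrt t / Real.sqrt ρ) := by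
  set K : ℝ := C * ‖p - q‖ * Real.sqrt t / Real.sqrt ρ with hK_def
  have hK0 : 0 ≤ K := by positivity
  set r0 : ℝ := Real.sqrt 2⁻¹ with hr0_def
  have hr00 : 0 ≤ r0 := Real.sqrt_nonneg _
  have hr0sq : r0 ^ 2 = 2⁻¹ := Real.sq_sqrt (by norm_num)
  have hr034 : r0 ≤ 3 / 4 := by nlinarith [Real.sqrt_nonneg (2⁻¹ : ℝ)]
  have htk0 : ∀ k : ℕ, 0 < t / 2 ^ k := fun k => div_pos ht0 (by positivity)
  have htk1 : ∀ k : ℕ, t / 2 ^ k ≤ 1 := fun k => by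
    rw [div_le_one (by positivity)]
    calc t ≤ 1 := ht1
    _ ≤ 2 ^ k := one_le_pow₀ (by norm_num)
  set f : ℕ → EuclideanSpace ℝ (Fin M) :=
    fun k => F ((1 - t / 2 ^ k) • q + (t / 2 ^ k) • p) with hf_def
  have step : ∀ k : ℕ, dist (f k) (f (k + 1)) ≤ K * r0 ^ (k + 1) := by
    intro k
    have h := hl_seg hconv hcompl hρ hball hC hdiff hder hq hq
      (htk0 (k+1)) (htk1 (k+1)) (htk0 k) (htk1 k)
    have hpow : (2:ℝ) ^ k ≤ 2 ^ (k+1) := by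
      have : (0:ℝ) < 2 ^ k := by positivity
      rw [pow_succ]; nlinarith
    have hmin : min (t / 2 ^ (k+1)) (t / 2 ^ k) = t / 2 ^ (k+1) := by
      apply min_eq_left
      exact div_le_div_of_nonneg_left ht0.le (by positivity) hpow
    have hdiffX : ((1 - t / 2 ^ k) • q + (t / 2 ^ k) • p) -
        ((1 - t / 2 ^ (k+1)) • q + (t / 2 ^ (k+1)) • p)
        = (t / 2 ^ k - t / 2 ^ (k+1)) • (p - q) := by module
    have hcoef : t / 2 ^ k - t / 2 ^ (k+1) = t / 2 ^ (k+1) := by ring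
    have hnorm : ‖((1 - t / 2 ^ k) • q + (t / 2 ^ k) • p) -
        ((1 - t / 2 ^ (k+1)) • q + (t / 2 ^ (k+1)) • p)‖ = (t / 2 ^ (k+1)) * ‖p - q‖ := by
      rw [hdiffX, hcoef, norm_smul, Real.norm_eq_abs, abs_of_pos (htk0 (k+1))]
    rw [hmin, hnorm] at h
    rw [dist_eq_norm]
    simp only [hf_def]
    refine h.trans (le_of_eq ?_)
    have hr0k : ((2:ℝ)⁻¹) ^ (k+1) = r0 ^ (k+1) * r0 ^ (k+1) := by
      rw [← pow_add, ← two_mul, pow_mul, hr0sq]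
    have h2 : Real.sqrt ((2:ℝ)⁻¹ ^ (k+1)) = r0 ^ (k+1) := by
      rw [hr0k, Real.sqrt_mul_self (pow_nonneg hr00 _)]
    have h3 : t / 2 ^ (k+1) = t * (2:ℝ)⁻¹ ^ (k+1) := by
      rw [div_eq_mul_inv, inv_pow]
    have h4 : Real.sqrt (t / 2 ^ (k+1) * ρ) = Real.sqrt t * r0 ^ (k+1) * Real.sqrt ρ := by
      rw [h3, Real.sqrt_mul (by positivity), Real.sqrt_mul ht0.le, h2]
    have ht_eq : t = Real.sqrt t * Real.sqrt t := (Real.mul_self_sqrt ht0.le).symm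
    have hst : (0:ℝ) < Real.sqrt t := Real.sqrt_pos.mpr ht0
    have hsρ : (0:ℝ) < Real.sqrt ρ := Real.sqrt_pos.mpr hρ
    have hr0p : (0:ℝ) < r0 := Real.sqrt_pos.mpr (by norm_num)
    rw [h4, hK_def, h3]
    calc C / (Real.sqrt t * r0 ^ (k+1) * Real.sqrt ρ) * (t * (2:ℝ)⁻¹ ^ (k+1) * ‖p - q‖)
        = C / (Real.sqrt t * r0 ^ (k+1) * Real.sqrt ρ) *
          ((Real.sqrt t * Real.sqrt t) * (r0 ^ (k+1) * r0 ^ (k+1)) * ‖p - q‖) := by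
          rw [← ht_eq, ← hr0k]
      _ = C * ‖p - q‖ * Real.sqrt t / Real.sqrt ρ * r0 ^ (k+1) := by
          field_simp
  have sum_bound : ∀ n : ℕ, dist (f 0) (f n) ≤ 3 * K := by
    intro n
    calc dist (f 0) (f n) ≤ ∑ i ∈ Finset.range n, dist (f i) (f (i+1)) :=
        dist_le_range_sum_dist f n
    _ ≤ ∑ i ∈ Finset.range n, K * r0 ^ (i+1) := Finset.sum_le_sum (fun i _ => step i)
    _ = K * ∑ i ∈ Finset.range n, r0 ^ (i+1) := by rw [Finset.mul_sum]
    _ ≤ K * 3 := by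
        refine mul_le_mul_of_nonneg_left ?_ hK0
        calc ∑ i ∈ Finset.range n, r0 ^ (i+1)
            ≤ ∑ i ∈ Finset.range n, (3/4:ℝ) ^ (i+1) :=
            Finset.sum_le_sum (fun i _ => pow_le_pow_left₀ hr00 hr034 (i+1))
        _ = (3/4) * ∑ i ∈ Finset.range n, (3/4:ℝ) ^ i := by
            rw [Finset.mul_sum]
            refine Finset.sum_congr rfl (fun i _ => ?_)
            rw [pow_succ]; ring
        _ ≤ (3/4) * (1 - 3/4)⁻¹ := by
            refine mul_le_mul_of_nonneg_left ?_ (by norm_num)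
            have hs : Summable (fun i : ℕ => (3/4:ℝ)^i) :=
              summable_geometric_of_lt_one (by norm_num) (by norm_num)
            calc ∑ i ∈ Finset.range n, (3/4:ℝ)^i ≤ ∑' i : ℕ, (3/4:ℝ)^i :=
                Summable.sum_le_tsum (Finset.range n) (fun i _ => by positivity) hs
            _ = (1 - 3/4)⁻¹ := tsum_geometric_of_lt_one (by norm_num) (by norm_num)
        _ = 3 := by norm_num
    _ = 3 * K := mul_comm _ _
  have h2 : Filter.Tendsto (fun n : ℕ => t / 2 ^ n) Filter.atTop (nhds 0) := by
    have h1 := tendsto_pow_atTop_nhds_zero_of_lt_one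
      (by norm_num : (0:ℝ) ≤ 2⁻¹) (by norm_num : (2:ℝ)⁻¹ < 1)
    have h := h1.const_mul t
    simpa [div_eq_mul_inv, inv_pow, mul_zero] using h
  have hgq : Filter.Tendsto (fun n : ℕ => (1 - t/2^n) • q + (t/2^n) • p)
      Filter.atTop (nhds q) := by
    have hg : Continuous fun s : ℝ => (1 - s) • q + s • p := by fun_prop
    have := (hg.tendsto 0).comp h2
    simpa [Function.comp_def] using this
  have hFq : Filter.Tendsto f Filter.atTop (nhds (F q)) :=
    ((hdiff q hq).continuousAt.tendsto).comp hgq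
  have hd : Filter.Tendsto (fun n => dist (f 0) (f n)) Filter.atTop
      (nhds (dist (f 0) (F q))) := tendsto_const_nhds.dist hFq
  have hfin : dist (f 0) (F q) ≤ 3 * K :=
    le_of_tendsto hd (Filter.Eventually.of_forall sum_bound)
  have hf0 : f 0 = F ((1 - t) • q + t • p) := by simp [hf_def]
  rw [← dist_eq_norm, ← hf0]
  exact hfin

theorem hardy_littlewood_type {N M : ℕ} (D : Set (EuclideanSpace ℝ (Fin N)))
    (hD : IsOpen D) (hconv : Convex ℝ D) (hbdd : Bornology.IsBounded D) (hne : D.Nonempty)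
    (F : EuclideanSpace ℝ (Fin N) → EuclideanSpace ℝ (Fin M)) (C : ℝ) (hC : 0 < C)
    (hdiff : ∀ x ∈ D, DifferentiableAt ℝ F x)
    (hder : ∀ x ∈ D, ‖fderiv ℝ F x‖ ≤ C / Real.sqrt (Metric.infDist x Dᶜ)) :
    (∃ G : EuclideanSpace ℝ (Fin N) → EuclideanSpace ℝ (Fin M),
      ContinuousOn G (closure D) ∧ Set.EqOn G F D) ∧
    ∃ C' > 0, ∀ x ∈ D, ∀ y ∈ D, ‖F x - F y‖ ≤ C' * ‖x - y‖ ^ ((1 : ℝ) / 2) := by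
  by_cases hcompl : Dᶜ.Nonempty
  · -- main case
    obtain ⟨p, hp⟩ := hne
    obtain ⟨ρ, hρ, hball⟩ := Metric.isOpen_iff.mp hD p hp
    set R : ℝ := Metric.diam D + 1 with hR_def
    have hdiamnn : 0 ≤ Metric.diam D := Metric.diam_nonneg
    have hR0 : 0 < R := by rw [hR_def]; linarith
    have hdist : ∀ a ∈ D, ∀ b ∈ D, ‖a - b‖ ≤ R := by
      intro a ha b hb
      rw [← dist_eq_norm]
      have := Metric.dist_le_diam_of_mem hbdd ha hb
      rw [hR_def]; linarith
    set C' : ℝ := 7 * C * Real.sqrt R / Real.sqrt ρ with hC'_def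
    have hC'0 : 0 < C' := by
      rw [hC'_def]; positivity
    have key : ∀ x ∈ D, ∀ y ∈ D, ‖F x - F y‖ ≤ C' * ‖x - y‖ ^ ((1 : ℝ) / 2) := by
      intro x hx y hy
      rcases eq_or_ne x y with rfl | hxy
      · simp
      · have hr0 : 0 < ‖x - y‖ := by rwa [norm_pos_iff, sub_ne_zero]
        set r : ℝ := ‖x - y‖ with hr_def
        have hrR : r ≤ R := hdist x hx y hy
        set t : ℝ := r / R with ht_def
        have ht0 : 0 < t := div_pos hr0 hR0
        have ht1 : t ≤ 1 := div_le_one_of_le₀ hrR hR0.le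
        have ha : 0 < Real.sqrt r := Real.sqrt_pos.mpr hr0
        have hb : 0 < Real.sqrt R := Real.sqrt_pos.mpr hR0
        have hc : 0 < Real.sqrt ρ := Real.sqrt_pos.mpr hρ
        have haa : Real.sqrt r * Real.sqrt r = r := Real.mul_self_sqrt hr0.le
        have hbb : Real.sqrt R * Real.sqrt R = R := Real.mul_self_sqrt hR0.le
        have hsq_t : Real.sqrt t = Real.sqrt r / Real.sqrt R := by
          rw [ht_def, Real.sqrt_div hr0.le]
        have A1 := hl_radial hconv hcompl hρ hball hC hdiff hder hx ht0 ht1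
        have A2 := hl_radial hconv hcompl hρ hball hC hdiff hder hy ht0 ht1
        have Amid := hl_seg hconv hcompl hρ hball hC hdiff hder hx hy ht0 ht1 ht0 ht1
        rw [min_self] at Amid
        have hmidnorm : ‖((1 - t) • y + t • p) - ((1 - t) • x + t • p)‖ ≤ r := by
          have he : ((1 - t) • y + t • p) - ((1 - t) • x + t • p) = (1 - t) • (y - x) := by
            module
          rw [he, norm_smul, Real.norm_eq_abs, abs_of_nonneg (by linarith)]
          have hyx : ‖y - x‖ = r := by rw [hr_def, norm_sub_rev]
          nlinarith [norm_nonneg (y - x)]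
        have Amid' : ‖F ((1 - t) • y + t • p) - F ((1 - t) • x + t • p)‖ ≤
            C / Real.sqrt (t * ρ) * r := by
          refine Amid.trans ?_
          have h0 : 0 ≤ C / Real.sqrt (t * ρ) := by positivity
          exact mul_le_mul_of_nonneg_left hmidnorm h0
        have tri := dist_triangle4 (F x) (F ((1 - t) • x + t • p))
          (F ((1 - t) • y + t • p)) (F y)
        simp only [dist_eq_norm] at tri
        have main : ‖F x - F y‖ ≤
            3 * (C * ‖p - x‖ * Real.sqrt t / Real.sqrt ρ) + C / Real.sqrt (t * ρ) * r
            + 3 * (C * ‖p - y‖ * Real.sqrt t / Real.sqrt ρ) := by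
          refine tri.trans ?_
          have e1 : ‖F x - F ((1 - t) • x + t • p)‖ ≤
              3 * (C * ‖p - x‖ * Real.sqrt t / Real.sqrt ρ) := by
            rw [norm_sub_rev]; exact A1
          have e2 : ‖F ((1 - t) • x + t • p) - F ((1 - t) • y + t • p)‖ ≤
              C / Real.sqrt (t * ρ) * r := by
            rw [norm_sub_rev]; exact Amid'
          have e3 : ‖F ((1 - t) • y + t • p) - F y‖ ≤
              3 * (C * ‖p - y‖ * Real.sqrt t / Real.sqrt ρ) := A2
          linarith
        have hrp : ‖x - y‖ ^ ((1 : ℝ) / 2) = Real.sqrt r := by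
          rw [← hr_def, Real.sqrt_eq_rpow]
        rw [hrp]
        refine main.trans ?_
        have hP1 : ‖p - x‖ ≤ R := hdist p hp x hx
        have hP2 : ‖p - y‖ ≤ R := hdist p hp y hy
        have hRt : R * Real.sqrt t = Real.sqrt R * Real.sqrt r := by
          rw [hsq_t, show R * (Real.sqrt r / Real.sqrt R) = Real.sqrt r * (R / Real.sqrt R) by
            ring, Real.div_sqrt, mul_comm]
        have hT1 : C * ‖p - x‖ * Real.sqrt t / Real.sqrt ρ ≤
            C * (Real.sqrt R * Real.sqrt r) / Real.sqrt ρ := by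
          rw [mul_assoc]
          gcongr C * ?_ / Real.sqrt ρ
          calc ‖p - x‖ * Real.sqrt t ≤ R * Real.sqrt t :=
              mul_le_mul_of_nonneg_right hP1 (Real.sqrt_nonneg _)
          _ = Real.sqrt R * Real.sqrt r := hRt
        have hT2 : C * ‖p - y‖ * Real.sqrt t / Real.sqrt ρ ≤
            C * (Real.sqrt R * Real.sqrt r) / Real.sqrt ρ := by
          rw [mul_assoc]
          gcongr C * ?_ / Real.sqrt ρ
          calc ‖p - y‖ * Real.sqrt t ≤ R * Real.sqrt t :=
              mul_le_mul_of_nonneg_right hP2 (Real.sqrt_nonneg _)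
          _ = Real.sqrt R * Real.sqrt r := hRt
        have hTm : C / Real.sqrt (t * ρ) * r = C * (Real.sqrt R * Real.sqrt r) / Real.sqrt ρ := by
          rw [Real.sqrt_mul ht0.le, hsq_t]
          field_simp
          linear_combination (-1 : ℝ) * haa
        rw [hTm]
        calc 3 * (C * ‖p - x‖ * Real.sqrt t / Real.sqrt ρ)
            + C * (Real.sqrt R * Real.sqrt r) / Real.sqrt ρ
            + 3 * (C * ‖p - y‖ * Real.sqrt t / Real.sqrt ρ)
            ≤ 3 * (C * (Real.sqrt R * Real.sqrt r) / Real.sqrt ρ)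
            + C * (Real.sqrt R * Real.sqrt r) / Real.sqrt ρ
            + 3 * (C * (Real.sqrt R * Real.sqrt r) / Real.sqrt ρ) := by linarith
        _ = C' * Real.sqrt r := by rw [hC'_def]; ring
    refine ⟨?_, ⟨C', hC'0, key⟩⟩
    have hexists : ∀ z ∈ closure D, ∃ w, Filter.Tendsto F (nhdsWithin z D) (nhds w) := by
      intro z hz
      have hnb : (nhdsWithin z D).NeBot := mem_closure_iff_nhdsWithin_neBot.mp hz
      have hcauchy : Cauchy ((nhdsWithin z D).map F) := by
        rw [Metric.cauchy_iff]
        refine ⟨Filter.map_neBot, ?_⟩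
        intro ε hε
        set δ : ℝ := (ε / (2 * C')) ^ 2 / 2 with hδ_def
        have hδ0 : 0 < δ := by positivity
        refine ⟨F '' (D ∩ Metric.ball z δ), Filter.image_mem_map ?_, ?_⟩
        · exact Filter.inter_mem self_mem_nhdsWithin
            (mem_nhdsWithin_of_mem_nhds (Metric.ball_mem_nhds z hδ0))
        · rintro u ⟨a, ⟨haD, haB⟩, rfl⟩ v ⟨b, ⟨hbD, hbB⟩, rfl⟩
          have hab : ‖a - b‖ ≤ 2 * δ := by
            rw [← dist_eq_norm]
            have h1 : dist a z < δ := haB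
            have h2 : dist z b < δ := by rw [dist_comm]; exact hbB
            have := dist_triangle a z b
            linarith
          have hF1 := key a haD b hbD
          have hF2 : ‖a - b‖ ^ ((1:ℝ)/2) ≤ (2 * δ) ^ ((1:ℝ)/2) :=
            Real.rpow_le_rpow (norm_nonneg _) hab (by norm_num)
          have hF3 : (2 * δ) ^ ((1:ℝ)/2) = ε / (2 * C') := by
            rw [← Real.sqrt_eq_rpow, hδ_def]
            rw [show 2 * ((ε / (2 * C')) ^ 2 / 2) = (ε / (2 * C')) ^ 2 by ring]
            exact Real.sqrt_sq (by positivity)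
          rw [dist_eq_norm]
          calc ‖F a - F b‖ ≤ C' * ‖a - b‖ ^ ((1:ℝ)/2) := hF1
          _ ≤ C' * ((2 * δ) ^ ((1:ℝ)/2)) := mul_le_mul_of_nonneg_left hF2 hC'0.le
          _ = ε / 2 := by rw [hF3]; field_simp
          _ < ε := by linarith
      obtain ⟨w, hw⟩ := CompleteSpace.complete hcauchy
      exact ⟨w, hw⟩
    refine ⟨extendFrom D F, continuousOn_extendFrom subset_rfl hexists, ?_⟩
    intro x hx
    exact extendFrom_extends (fun a ha => (hdiff a ha).continuousAt.continuousWithinAt) x hx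
  · -- degenerate case : D = univ, space is bounded hence trivial
    have hDuniv : D = Set.univ := by
      rwa [Set.not_nonempty_iff_eq_empty, compl_empty_iff] at hcompl
    have hdiff' : Differentiable ℝ F := fun x => hdiff x (by rw [hDuniv]; trivial)
    have hsub : ∀ x y : EuclideanSpace ℝ (Fin N), x = y := by
      intro x y
      by_contra hxy
      obtain ⟨K, hK⟩ := isBounded_iff_forall_norm_le.mp hbdd
      have hxy0 : 0 < ‖x - y‖ := by rwa [norm_pos_iff, sub_ne_zero]
      obtain ⟨n, hn⟩ := exists_nat_gt (K / ‖x - y‖)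
      have h1 : ‖(n : ℝ) • (x - y)‖ ≤ K := hK _ (by rw [hDuniv]; trivial)
      rw [norm_smul, Real.norm_natCast] at h1
      have h2 : K / ‖x - y‖ < n := hn
      have : K < (n : ℝ) * ‖x - y‖ := by
        rw [div_lt_iff₀ hxy0] at h2
        linarith
      linarith
    refine ⟨⟨F, hdiff'.continuous.continuousOn, fun x _ => rfl⟩, 1, one_pos, ?_⟩
    intro x _ y _
    rw [hsub x y]
    simp
end

section
/- Let ρ be a negative subharmonic function on the open unit disc Δ ⊂ ℂ, continuous on the closed disc. Suppose ρ ≤ −C < 0 on the set {z ∈ Δ : |z| ≤ 1/2}. Then for every z ∈ Δ with 1/2 ≤ |z| < 1, ρ(z) ≤ −(C/4)·(1 − |z|). -/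
open Complex Metric Set intervalIntegral Real Filter

lemma mean_value_holo {f : ℂ → ℂ} {c : ℂ} {R : ℝ} (h0 : 0 < R)
    (hc : ContinuousOn f (closedBall c R))
    (hd : ∀ z ∈ ball c R, DifferentiableAt ℂ f z) :
    ∫ t in (0:ℝ)..(2*π), f (circleMap c R t) = (2*π : ℝ) * f c := by
  have key := circleIntegral_sub_center_inv_smul_of_differentiable_on_off_countable h0
    Set.countable_empty hc (fun z hz => hd z hz.1)
  rw [circleIntegral] at key
  have hinteg : ∀ t : ℝ, deriv (circleMap c R) t • ((circleMap c R t - c)⁻¹ • f (circleMap c R t))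
      = Complex.I * f (circleMap c R t) := by
    intro t
    have hne : circleMap 0 R t ≠ 0 := by simp [h0.ne']
    rw [deriv_circleMap, circleMap_sub_center, smul_eq_mul, smul_eq_mul]
    field_simp
  simp only [hinteg] at key
  rw [intervalIntegral.integral_const_mul] at key
  have hI : (Complex.I : ℂ) ≠ 0 := Complex.I_ne_zero
  have : Complex.I * ∫ t in (0:ℝ)..(2*π), f (circleMap c R t)
      = Complex.I * ((2*π : ℝ) * f c) := by
    rw [key, smul_eq_mul]; push_cast; ring
  exact mul_left_cancel₀ hI this

lemma mean_value_log_abs {c : ℂ} {R : ℝ} (h0 : 0 < R) (hR : R < ‖c‖) :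
    ∫ t in (0:ℝ)..(2*π), Real.log (‖circleMap c R t‖)
      = (2*π) * Real.log (‖c‖) := by
  have hc0 : (0:ℝ) < ‖c‖ := lt_trans h0 hR
  set u : ℂ := (starRingEnd ℂ) c / (‖c‖ : ℂ) with hu
  have hau : ‖u‖ = 1 := by
    rw [hu, norm_div, Complex.norm_conj, Complex.norm_real, norm_norm, div_self hc0.ne']
  have h1 : ((‖c‖ : ℂ)) ≠ 0 := by exact_mod_cast hc0.ne'
  have hcu : c * u = (‖c‖ : ℂ) := by
    rw [hu, mul_div_assoc', Complex.mul_conj, Complex.normSq_eq_norm_sq]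
    push_cast
    field_simp
  have hre : ∀ w ∈ closedBall c R, 0 < (w * u).re := by
    intro w hw
    have hws : w * u = (‖c‖ : ℂ) + (w - c) * u := by rw [← hcu]; ring
    have habs : ‖(w - c) * u‖ ≤ R := by
      rw [norm_mul, hau, mul_one]
      simpa [Complex.dist_eq] using mem_closedBall_iff_norm.mp hw
    have h2 := Complex.abs_re_le_norm ((w - c) * u)
    rw [hws]
    simp only [Complex.add_re, Complex.ofReal_re]
    linarith [abs_le.mp (le_trans h2 habs) |>.1]
  set f : ℂ → ℂ := fun w => Complex.log (w * u) with hf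
  have hdAt : ∀ w ∈ closedBall c R, DifferentiableAt ℂ f w := by
    intro w hw
    exact (Complex.differentiableAt_log (Or.inl (hre w hw))).comp w
      (differentiableAt_id.mul_const u)
  have hmv := mean_value_holo h0 (f := f)
    (fun w hw => (hdAt w hw).continuousAt.continuousWithinAt)
    (fun w hw => hdAt w (ball_subset_closedBall hw))
  have hcirc : ∀ t : ℝ, circleMap c R t ∈ closedBall c R := circleMap_mem_closedBall c h0.le
  have hcont2 : Continuous fun t => f (circleMap c R t) := by
    rw [continuous_iff_continuousAt]; intro t
    exact ((hdAt _ (hcirc t)).continuousAt).comp (continuous_circleMap c R).continuousAt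
  have hint : IntervalIntegrable (fun t => f (circleMap c R t)) MeasureTheory.volume 0 (2*π) :=
    hcont2.intervalIntegrable _ _
  have hcomm := Complex.reCLM.intervalIntegral_comp_comm hint
  have hre_eq : ∀ t : ℝ, (f (circleMap c R t)).re = Real.log (‖circleMap c R t‖) := by
    intro t; rw [hf]; simp only []
    rw [Complex.log_re, norm_mul, hau, mul_one]
  calc ∫ t in (0:ℝ)..(2*π), Real.log (‖circleMap c R t‖)
      = ∫ t in (0:ℝ)..(2*π), Complex.reCLM (f (circleMap c R t)) := by
        refine intervalIntegral.integral_congr fun t _ => ?_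
        simp [Complex.reCLM_apply, hre_eq t]
    _ = Complex.reCLM (∫ t in (0:ℝ)..(2*π), f (circleMap c R t)) := hcomm
    _ = (2*π) * Real.log (‖c‖) := by
        rw [hmv, hf]
        simp only [Complex.reCLM_apply]
        rw [hcu]
        simp [Complex.mul_re, Complex.log_re, Complex.norm_real, norm_norm, abs_of_pos hc0]

lemma mean_value_normSq (c : ℂ) (R : ℝ) :
    ∫ t in (0:ℝ)..(2*π), Complex.normSq (circleMap c R t)
      = (2*π) * (Complex.normSq c + R^2) := by
  have hpt : ∀ t : ℝ, Complex.normSq (circleMap c R t)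
      = (Complex.normSq c + R^2) + (2*R*c.re) * Real.cos t + (2*R*c.im) * Real.sin t := by
    intro t
    simp only [circleMap, Complex.normSq_apply, Complex.add_re, Complex.add_im,
      Complex.mul_re, Complex.mul_im, Complex.ofReal_re, Complex.ofReal_im]
    rw [Complex.exp_ofReal_mul_I_re, Complex.exp_ofReal_mul_I_im]
    ring_nf
    nlinarith [Real.sin_sq_add_cos_sq t]
  rw [intervalIntegral.integral_congr (fun t _ => hpt t)]
  rw [intervalIntegral.integral_add, intervalIntegral.integral_add,
    intervalIntegral.integral_const, intervalIntegral.integral_const_mul,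
    intervalIntegral.integral_const_mul, _root_.integral_cos,
    _root_.integral_sin]
  · simp [Real.sin_two_pi, Real.cos_two_pi, smul_eq_mul]
  · exact intervalIntegrable_const
  · exact (continuous_const.mul Real.continuous_cos).intervalIntegrable _ _
  · exact (intervalIntegrable_const.add
      ((continuous_const.mul Real.continuous_cos).intervalIntegrable _ _))
  · exact (continuous_const.mul Real.continuous_sin).intervalIntegrable _ _

lemma rho_nonpos_sphere {ρ : ℂ → ℝ}
    (hcont : ContinuousOn ρ (Metric.closedBall (0 : ℂ) 1))
    (hneg : ∀ z ∈ Metric.ball (0 : ℂ) 1, ρ z < 0) :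
    ∀ z : ℂ, ‖z‖ = 1 → ρ z ≤ 0 := by
  intro z hz
  have hz' : z ∈ closedBall (0:ℂ) 1 := by
    simp [mem_closedBall, Complex.dist_eq, hz]
  have hcw : ContinuousWithinAt ρ (closedBall (0:ℂ) 1) z := hcont z hz'
  have hIoo : Set.Ioo (0:ℝ) 1 ∈ nhdsWithin (1:ℝ) (Set.Iio 1) :=
    Ioo_mem_nhdsLT_of_mem (by norm_num : (1:ℝ) ∈ Set.Ioc (0:ℝ) 1)
  have hbase : Tendsto (fun t : ℝ => (t:ℂ) * z) (nhdsWithin 1 (Set.Iio 1)) (nhds z) := by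
    have : Tendsto (fun t : ℝ => (t:ℂ) * z) (nhds 1) (nhds ((1:ℂ) * z)) :=
      (Complex.continuous_ofReal.mul continuous_const).tendsto 1
    simpa using this.mono_left nhdsWithin_le_nhds
  have hmem : ∀ t ∈ Set.Ioo (0:ℝ) 1, (t:ℂ) * z ∈ ball (0:ℂ) 1 := by
    intro t ht
    simp only [mem_ball, Complex.dist_eq, sub_zero, norm_mul, Complex.norm_real, Real.norm_eq_abs, hz, mul_one]
    rw [abs_of_pos ht.1]
    exact ht.2
  have hmap : Tendsto (fun t : ℝ => (t:ℂ) * z) (nhdsWithin 1 (Set.Iio 1))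
      (nhdsWithin z (closedBall (0:ℂ) 1)) := by
    refine tendsto_nhdsWithin_of_tendsto_nhds_of_eventually_within _ hbase ?_
    filter_upwards [hIoo] with t ht
    exact ball_subset_closedBall (hmem t ht)
  have htend : Tendsto (fun t : ℝ => ρ ((t:ℂ) * z)) (nhdsWithin 1 (Set.Iio 1)) (nhds (ρ z)) :=
    hcw.tendsto.comp hmap
  refine le_of_tendsto htend ?_
  filter_upwards [hIoo] with t ht
  exact (hneg _ (hmem t ht)).le

theorem hopf_lemma_disc (ρ : ℂ → ℝ)
    (hcont : ContinuousOn ρ (Metric.closedBall (0 : ℂ) 1))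
    (hsub : ∀ z ∈ Metric.ball (0 : ℂ) 1, ∀ s : ℝ, 0 < s →
      Metric.closedBall z s ⊆ Metric.ball (0 : ℂ) 1 →
      ρ z ≤ (1 / (2 * Real.pi)) *
        ∫ t in (0 : ℝ)..(2 * Real.pi), ρ (z + (s : ℂ) * Complex.exp ((t : ℂ) * Complex.I)))
    (hneg : ∀ z ∈ Metric.ball (0 : ℂ) 1, ρ z < 0)
    (C : ℝ) (hC : 0 < C)
    (hbound : ∀ z : ℂ, ‖z‖ ≤ 1 / 2 → ρ z ≤ -C) :
    ∀ z : ℂ, 1 / 2 ≤ ‖z‖ → ‖z‖ < 1 →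
      ρ z ≤ -(C / 4) * (1 - ‖z‖) := by
  have hπ : (0:ℝ) < π := Real.pi_pos
  have hlog2 : (0:ℝ) < Real.log 2 := Real.log_pos (by norm_num)
  set A : Set ℂ := closedBall (0:ℂ) 1 \ ball (0:ℂ) (1/2) with hA
  have hAmem : ∀ w : ℂ, w ∈ A ↔ 1/2 ≤ ‖w‖ ∧ ‖w‖ ≤ 1 := by
    intro w
    simp [hA, Complex.dist_eq, not_lt, and_comm]
  have hAcomp : IsCompact A := (isCompact_closedBall _ _).diff isOpen_ball
  -- the key estimate via the maximum principle
  have key : ∀ z ∈ A, ∀ ε : ℝ, 0 < ε →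
      ρ z - (C / Real.log 2) * Real.log (‖z‖) ≤ ε := by
    intro z hzA ε hε
    set g : ℂ → ℝ := fun w =>
      ρ w - (C / Real.log 2) * Real.log (‖w‖) + ε * (Complex.normSq w - 1) with hg
    have hgcont : ContinuousOn g A := by
      apply ContinuousOn.add
      apply ContinuousOn.sub
      · exact hcont.mono (fun w hw => hw.1)
      · apply ContinuousOn.mul continuousOn_const
        intro w hw
        have : ‖w‖ ≠ 0 := by
          have := (hAmem w).mp hw
          linarith [this.1]
        exact ((Real.continuousAt_log this).comp
          continuous_norm.continuousAt).continuousWithinAt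
      · exact (continuous_const.mul
          ((Complex.continuous_normSq).sub continuous_const)).continuousOn
    obtain ⟨z0, hz0A, hmax⟩ := hAcomp.exists_isMaxOn ⟨z, hzA⟩ hgcont
    obtain ⟨hz0l, hz0r⟩ := (hAmem z0).mp hz0A
    have hg0 : g z0 ≤ 0 := by
      rcases eq_or_lt_of_le hz0r with h1 | h1
      · -- |z0| = 1
        have hρ0 : ρ z0 ≤ 0 := rho_nonpos_sphere hcont hneg z0 h1
        have hnsq : Complex.normSq z0 = 1 := by
          rw [← Complex.sq_norm, h1]; norm_num
        simp only [hg, h1, hnsq, Real.log_one]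
        simp
        linarith
      rcases eq_or_lt_of_le hz0l with h2 | h2
      · -- |z0| = 1/2
        have hρb : ρ z0 ≤ -C := hbound z0 (le_of_eq h2.symm)
        have hnsq : Complex.normSq z0 = 1/4 := by
          rw [← Complex.sq_norm, ← h2]; norm_num
        have hlog : Real.log (‖z0‖) = -Real.log 2 := by
          rw [← h2]
          rw [one_div, Real.log_inv]
        simp only [hg, hlog, hnsq]
        have : C / Real.log 2 * -Real.log 2 = -C := by
          field_simp
        rw [this]
        nlinarith
      · -- interior: contradiction
        exfalso
        set r0 := ‖z0‖ with hr0
        set s : ℝ := min ((1 - r0)/2) (r0 - 1/2) with hs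
        have hspos : 0 < s := by
          apply lt_min <;> linarith
        have hs1 : s ≤ (1 - r0)/2 := min_le_left _ _
        have hs2 : s ≤ r0 - 1/2 := min_le_right _ _
        have hball : closedBall z0 s ⊆ ball (0:ℂ) 1 := by
          intro w hw
          have h3 : ‖w - z0‖ ≤ s := by
            simpa [Complex.dist_eq] using mem_closedBall_iff_norm.mp hw
          have h4 : ‖w‖ ≤ r0 + s := by
            calc ‖w‖ = ‖z0 + (w - z0)‖ := by ring_nf
            _ ≤ r0 + s := le_trans (norm_add_le _ _) (by linarith)
          simp only [mem_ball, Complex.dist_eq, sub_zero]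
          linarith
        have hz0ball : z0 ∈ ball (0:ℂ) 1 := by
          simp only [mem_ball, Complex.dist_eq, sub_zero]
          linarith
        have hsubm := hsub z0 hz0ball s hspos hball
        have hcircA : ∀ t : ℝ, circleMap z0 s t ∈ A := by
          intro t
          rw [hAmem]
          have h3 : ‖circleMap z0 s t - z0‖ = s := by
            rw [circleMap_sub_center]
            simp [norm_circleMap_zero, abs_of_pos hspos]
          constructor
          · have hn := norm_sub_norm_le z0 (circleMap z0 s t)
            have h6 : ‖z0 - circleMap z0 s t‖ = s := by
              rw [norm_sub_rev, h3]
            linarith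
          · have h5 : ‖circleMap z0 s t‖ ≤ r0 + s := by
              calc ‖circleMap z0 s t‖
                  = ‖z0 + (circleMap z0 s t - z0)‖ := by ring_nf
                _ ≤ r0 + s := by
                    refine le_trans (norm_add_le _ _) ?_
                    rw [h3]
            linarith
        have hcircball : ∀ t : ℝ, circleMap z0 s t ∈ closedBall (0:ℂ) 1 := by
          intro t
          exact ((hcircA t).1 : _)
        have habspos : ∀ t : ℝ, (0:ℝ) < ‖circleMap z0 s t‖ := by
          intro t
          have := ((hAmem _).mp (hcircA t)).1
          linarith
        -- integrability
        have hcρ : Continuous fun t => ρ (circleMap z0 s t) :=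
          hcont.comp_continuous (continuous_circleMap _ _) hcircball
        have hiρ : IntervalIntegrable (fun t => ρ (circleMap z0 s t))
            MeasureTheory.volume 0 (2*π) := hcρ.intervalIntegrable _ _
        have hclog : Continuous fun t => Real.log (‖circleMap z0 s t‖) :=
          (continuous_norm.comp (continuous_circleMap _ _)).log
            (fun t => (habspos t).ne')
        have hilog : IntervalIntegrable (fun t => Real.log (‖circleMap z0 s t‖))
            MeasureTheory.volume 0 (2*π) := hclog.intervalIntegrable _ _
        have hcsq : Continuous fun t => Complex.normSq (circleMap z0 s t) :=
          Complex.continuous_normSq.comp (continuous_circleMap _ _)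
        have hisq : IntervalIntegrable (fun t => Complex.normSq (circleMap z0 s t))
            MeasureTheory.volume 0 (2*π) := hcsq.intervalIntegrable _ _
        -- mean values
        have hlogmv := mean_value_log_abs hspos (by rw [← hr0]; linarith : s < ‖z0‖)
        have hsqmv := mean_value_normSq z0 s
        -- the submean inequality, multiplied out
        have hIρ : 2*π * ρ z0 ≤ ∫ t in (0:ℝ)..(2*π), ρ (circleMap z0 s t) := by
          have heq : (∫ t in (0:ℝ)..(2*π), ρ (z0 + (s : ℂ) * Complex.exp ((t : ℂ) * Complex.I)))
              = ∫ t in (0:ℝ)..(2*π), ρ (circleMap z0 s t) := by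
            refine intervalIntegral.integral_congr fun t _ => ?_
            simp [circleMap]
          rw [heq] at hsubm
          have h2π : (0:ℝ) < 2*π := by linarith
          calc 2*π * ρ z0 ≤ 2*π * ((1 / (2 * π)) *
              ∫ t in (0:ℝ)..(2*π), ρ (circleMap z0 s t)) := by
                exact mul_le_mul_of_nonneg_left hsubm h2π.le
            _ = ∫ t in (0:ℝ)..(2*π), ρ (circleMap z0 s t) := by
                field_simp
        -- the integral of g over the circle
        have hgsplit : (∫ t in (0:ℝ)..(2*π), g (circleMap z0 s t))
            = (∫ t in (0:ℝ)..(2*π), ρ (circleMap z0 s t))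
              - (C / Real.log 2) * (∫ t in (0:ℝ)..(2*π), Real.log (‖circleMap z0 s t‖))
              + ε * ((∫ t in (0:ℝ)..(2*π), Complex.normSq (circleMap z0 s t)) - 2*π) := by
          simp only [hg]
          rw [intervalIntegral.integral_add (hiρ.sub (hilog.const_mul _))
            ((hisq.sub intervalIntegrable_const).const_mul _)]
          rw [intervalIntegral.integral_sub hiρ (hilog.const_mul _)]
          rw [intervalIntegral.integral_const_mul, intervalIntegral.integral_const_mul]
          rw [intervalIntegral.integral_sub hisq intervalIntegrable_const]
          rw [intervalIntegral.integral_const]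
          simp [smul_eq_mul]
        -- g on circle bounded by g z0
        have hgmono : (∫ t in (0:ℝ)..(2*π), g (circleMap z0 s t)) ≤ 2*π * g z0 := by
          have hgc : Continuous fun t => g (circleMap z0 s t) := by
            simp only [hg]
            exact ((hcρ.sub (continuous_const.mul hclog)).add
              (continuous_const.mul (hcsq.sub continuous_const)))
          calc (∫ t in (0:ℝ)..(2*π), g (circleMap z0 s t))
              ≤ ∫ _t in (0:ℝ)..(2*π), g z0 := by
                apply intervalIntegral.integral_mono_on (by linarith)
                  (hgc.intervalIntegrable _ _) intervalIntegrable_const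
                intro t _
                exact hmax (hcircA t)
            _ = 2*π * g z0 := by
                rw [intervalIntegral.integral_const, smul_eq_mul, sub_zero]
        -- combine
        have hnsq0 : Complex.normSq z0 = r0^2 := by rw [← Complex.sq_norm]
        have hfinal : 2*π * g z0 ≤ 2*π * g z0 - 2*π*ε*s^2 := by
          have egz : g z0 = ρ z0 - C / Real.log 2 * Real.log (‖z0‖)
              + ε * (Complex.normSq z0 - 1) := rfl
          have e1 : 2*π * g z0 = 2*π*ρ z0 - (C / Real.log 2) * (2*π*Real.log (‖z0‖))
              + ε * (2*π*Complex.normSq z0 - 2*π) := by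
            rw [egz]; ring
          calc 2*π * g z0 ≤ (∫ t in (0:ℝ)..(2*π), ρ (circleMap z0 s t))
              - (C / Real.log 2) * (2*π*Real.log (‖z0‖))
              + ε * (2*π*Complex.normSq z0 - 2*π) := by rw [e1]; linarith
            _ = (∫ t in (0:ℝ)..(2*π), g (circleMap z0 s t)) - 2*π*ε*s^2 := by
                rw [hgsplit, hlogmv, hsqmv]
                ring
            _ ≤ 2*π * g z0 - 2*π*ε*s^2 := by linarith
        have hpos : 0 < 2*π*ε*s^2 := by positivity
        linarith
    -- conclude for z
    have hzineq : g z ≤ g z0 := hmax hzA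
    have hnsqz : 0 ≤ Complex.normSq z := Complex.normSq_nonneg z
    simp only [hg] at hzineq hg0
    nlinarith
  -- from the key estimate to the conclusion
  intro z hz1 hz2
  have hzA : z ∈ A := (hAmem z).mpr ⟨hz1, hz2.le⟩
  have hle : ρ z ≤ (C / Real.log 2) * Real.log (‖z‖) := by
    have := fun ε hε => key z hzA ε hε
    by_contra hcon
    push_neg at hcon
    have hδ : 0 < (ρ z - (C / Real.log 2) * Real.log (‖z‖)) / 2 := by linarith
    have := key z hzA _ hδ
    linarith
  set r := ‖z‖ with hr
  have hrpos : (0:ℝ) < r := by linarith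
  have hlogle : Real.log r ≤ r - 1 := Real.log_le_sub_one_of_pos hrpos
  have hq : C / Real.log 2 ≥ C / 4 := by
    apply div_le_div_of_nonneg_left hC.le hlog2
    nlinarith [Real.log_two_lt_d9]
  calc ρ z ≤ (C / Real.log 2) * Real.log r := hle
    _ ≤ (C / Real.log 2) * (r - 1) := by
        apply mul_le_mul_of_nonneg_left hlogle
        positivity
    _ ≤ (C / 4) * (r - 1) := by nlinarith
    _ = -(C / 4) * (1 - r) := by ring
end
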